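/- arXiv:2111.04663 — 3 statements merged into one kernel-verified Lean document; each statement's English description precedes it below -/
import Mathlib

section
/- Let Ξ ⊆ ℝⁿ, q ∈ [1,∞), let ξ̂₁,…,ξ̂_N ∈ Ξ, let 𝒳 ⊆ ℝᵐ, and let F, G : ℝᵐ × ℝⁿ → ℝ be q-Lipschitz in ξ with constants γ_{x,F,q} and γ_{x,G,q}. Assume that for each x ∈ 𝒳 the images F(x,Ξ) and G(x,Ξ) are intervals in ℝ. For each x ∈ 𝒳 let B^F_x (resp. B^G_x) denote the set of probability measures Q supported on the closure of F(x,Ξ) (resp. of G(x,Ξ)) with finite first moment and with 1-Wasserstein distance (cost |·|) at most ε γ_{x,F,q} from P̂^{x,F}_N (resp. at most ε γ_{x,G,q} from P̂^{x,G}_N). Then, for every ε > 0 and μ ∈ ℝ, the value inf{ sup_{Q∈B^F_x} E_{ζ∼Q}[ζ] : x ∈ 𝒳, inf_{Q∈B^G_x} E_{ζ∼Q}[ζ] ≥ μ } equals inf{ min{ (1/N) Σ_{i=1}^N F(x, ξ̂_i) + ε γ_{x,F,q}, sup_{ξ∈Ξ} F(x,ξ) } : x ∈ 𝒳, max{ (1/N)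 Σ_{i=1}^N G(x, ξ̂_i) − ε γ_{x,G,q}, inf_{ξ∈Ξ} G(x,ξ) } ≥ μ } (both values taken in the extended reals). -/
open MeasureTheory
open scoped ENNReal

/-- The `p`-th power transport cost of a coupling `π` with ground cost `d`. -/
noncomputable def transportCost {α : Type*} [MeasurableSpace α]
    (p : ℝ) (d : α → α → ℝ) (π : Measure (α × α)) : ℝ≥0∞ :=
  ∫⁻ w, ENNReal.ofReal (d w.1 w.2 ^ p) ∂π

/-- The `p`-Wasserstein distance between `μ` and `ν` with ground cost `d`:
the infimum of the `p`-th root of the transport cost over all couplings. -/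
noncomputable def wassersteinDist {α : Type*} [MeasurableSpace α]
    (p : ℝ) (d : α → α → ℝ) (μ ν : Measure α) : ℝ≥0∞ :=
  (⨅ (π : Measure (α × α)) (_ : IsProbabilityMeasure π ∧
      π.map Prod.fst = μ ∧ π.map Prod.snd = ν), transportCost p d π) ^ (1 / p)

/-- The empirical distribution of the points `ξ 1, …, ξ N`. -/
noncomputable def empMeasure {α : Type*} [MeasurableSpace α] {N : ℕ}
    (ξ : Fin N → α) : Measure α :=
  (N : ℝ≥0∞)⁻¹ • ∑ i, Measure.dirac (ξ i)

/-- The `q`-norm on `ℝⁿ`. -/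
noncomputable def qnorm (q : ℝ) {n : ℕ} (v : Fin n → ℝ) : ℝ :=
  (∑ i, |v i| ^ q) ^ (1 / q)

/-- Probability measures on `ℝ` supported on `S`, with finite `p`-th moment, within
`p`-Wasserstein distance (with cost `|·|`) `ε` of `ν`. -/
def realWassersteinBall (p : ℝ) (S : Set ℝ) (ν : Measure ℝ) (ε : ℝ) : Set (Measure ℝ) :=
  {Q | IsProbabilityMeasure Q ∧ Q Sᶜ = 0 ∧
    (∫⁻ t, ENNReal.ofReal (|t| ^ p) ∂Q) < ⊤ ∧
    wassersteinDist p (fun a b => |a - b|) Q ν ≤ ENNReal.ofReal ε}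

section emp
variable {α : Type*} [MeasurableSpace α] {N : ℕ}

lemma empMeasure_prob (hN : 0 < N) (b : Fin N → α) : IsProbabilityMeasure (empMeasure b) := by
  constructor
  simp only [empMeasure, Measure.smul_apply, Measure.coe_finset_sum, Finset.sum_apply,
    Measure.dirac_apply_of_mem (Set.mem_univ _), smul_eq_mul]
  rw [Finset.sum_const, Finset.card_univ, Fintype.card_fin, nsmul_eq_mul, mul_one,
    ENNReal.inv_mul_cancel (by exact_mod_cast hN.ne') (by simp)]

lemma lintegral_empMeasure [MeasurableSingletonClass α] (f : α → ℝ≥0∞) (b : Fin N → α) :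
    ∫⁻ x, f x ∂empMeasure b = (N : ℝ≥0∞)⁻¹ * ∑ i, f (b i) := by
  simp [empMeasure, lintegral_smul_measure, lintegral_finset_sum_measure, lintegral_dirac]

lemma map_empMeasure {β : Type*} [MeasurableSpace β] {g : α → β} (hg : Measurable g)
    (b : Fin N → α) : (empMeasure b).map g = empMeasure (g ∘ b) := by
  rw [empMeasure, Measure.map_smul]
  congr 1
  induction (Finset.univ : Finset (Fin N)) using Finset.induction with
  | empty => simp
  | insert _ _ h ih => rw [Finset.sum_insert h, Finset.sum_insert h, Measure.map_add _ _ hg,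
      Measure.map_dirac' hg, ih]; rfl

lemma empMeasure_apply_zero (b : Fin N → α) {s : Set α} (hs : MeasurableSet s)
    (h : ∀ i, b i ∉ s) : empMeasure b s = 0 := by
  simp only [empMeasure, Measure.smul_apply, Measure.coe_finset_sum, Finset.sum_apply,
    smul_eq_mul]
  rw [Finset.sum_eq_zero fun i _ => by rw [Measure.dirac_apply' _ hs]; simp [h i], mul_zero]

lemma integral_empMeasure (hN : 0 < N) (b : Fin N → ℝ) :
    ∫ t, t ∂empMeasure b = (1 / (N : ℝ)) * ∑ i, b i := by
  rw [empMeasure, integral_smul_measure,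
    integral_finset_sum_measure (f := fun t : ℝ => t) (fun i _ => ⟨measurable_id.aestronglyMeasurable, by
      simp [HasFiniteIntegral, lintegral_dirac]⟩)]
  simp [integral_dirac, one_div]

end emp

section ball
variable {N : ℕ}

lemma integrable_id_empMeasure (hN : 0 < N) (b : Fin N → ℝ) :
    Integrable (fun t : ℝ => t) (empMeasure b) := by
  rw [empMeasure]
  refine Integrable.smul_measure ?_ (by simp [hN.ne'])
  exact (integrable_finset_sum_measure (f := fun t : ℝ => t)).mpr
    (fun i _ => ⟨measurable_id.aestronglyMeasurable, by
      simp [HasFiniteIntegral, lintegral_dirac]⟩)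

lemma wasserstein_emp_le (hN : 0 < N) (b a : Fin N → ℝ) :
    wassersteinDist 1 (fun x y => |x - y|) (empMeasure b) (empMeasure a)
      ≤ (N : ℝ≥0∞)⁻¹ * ∑ i, ENNReal.ofReal |b i - a i| := by
  have h11 : (1 : ℝ)/1 = 1 := by norm_num
  rw [wassersteinDist, h11, ENNReal.rpow_one]
  refine le_trans (iInf_le_of_le (empMeasure (fun i => (b i, a i)))
    (iInf_le_of_le ⟨empMeasure_prob hN _, ?_, ?_⟩ le_rfl)) ?_
  · rw [map_empMeasure measurable_fst]; rfl
  · rw [map_empMeasure measurable_snd]; rfl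
  · rw [transportCost, lintegral_empMeasure (f := fun w : ℝ × ℝ => ENNReal.ofReal (|w.1 - w.2| ^ (1:ℝ)))]
    simp [Real.rpow_one]

lemma emp_mem_ball (hN : 0 < N) {S : Set ℝ} (hS : MeasurableSet S) (b a : Fin N → ℝ)
    (hb : ∀ i, b i ∈ S) {ε : ℝ}
    (hcost : (1 / (N : ℝ)) * ∑ i, |b i - a i| ≤ ε) :
    empMeasure b ∈ realWassersteinBall 1 S (empMeasure a) ε := by
  refine ⟨empMeasure_prob hN b, empMeasure_apply_zero b hS.compl (fun i => by simp [hb i]), ?_, ?_⟩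
  · rw [lintegral_empMeasure (f := fun t : ℝ => ENNReal.ofReal (|t| ^ (1:ℝ)))]
    exact ENNReal.mul_lt_top (by simp [hN]) (ENNReal.sum_lt_top.2 fun i _ => ENNReal.ofReal_lt_top)
  · refine le_trans (wasserstein_emp_le hN b a) ?_
    have heq : (N : ℝ≥0∞)⁻¹ * ∑ i, ENNReal.ofReal |b i - a i|
        = ENNReal.ofReal ((1 / (N : ℝ)) * ∑ i, |b i - a i|) := by
      rw [ENNReal.ofReal_mul (by positivity),
        ENNReal.ofReal_sum_of_nonneg (fun i _ => abs_nonneg _)]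
      congr 1
      rw [one_div, ENNReal.ofReal_inv_of_pos (by exact_mod_cast hN), ENNReal.ofReal_natCast]
    rw [heq]
    exact ENNReal.ofReal_le_ofReal hcost

lemma abs_integral_sub_le (hN : 0 < N) {S : Set ℝ} (a : Fin N → ℝ) {ε : ℝ} (hε : 0 ≤ ε)
    {Q : Measure ℝ} (hQ : Q ∈ realWassersteinBall 1 S (empMeasure a) ε) :
    |(∫ t, t ∂Q) - (1 / (N : ℝ)) * ∑ i, a i| ≤ ε := by
  obtain ⟨hprob, _hsupp, hmom, hwass⟩ := hQ
  have hint : Integrable (fun t : ℝ => t) Q := by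
    refine ⟨measurable_id.aestronglyMeasurable, ?_⟩
    rw [HasFiniteIntegral]
    simpa [Real.enorm_eq_ofReal_abs, Real.rpow_one] using hmom
  rw [← integral_empMeasure hN a]
  refine le_of_forall_pos_le_add (fun δ hδ => ?_)
  have h11 : (1 : ℝ)/1 = 1 := by norm_num
  rw [wassersteinDist, h11, ENNReal.rpow_one] at hwass
  have h1 : (⨅ (π : Measure (ℝ × ℝ)) (_ : IsProbabilityMeasure π ∧
      π.map Prod.fst = Q ∧ π.map Prod.snd = empMeasure a),
      transportCost 1 (fun a b => |a - b|) π) < ENNReal.ofReal (ε + δ) :=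
    lt_of_le_of_lt hwass (by
      rw [ENNReal.ofReal_lt_ofReal_iff (by linarith)]; linarith)
  rw [iInf_lt_iff] at h1
  obtain ⟨π, h1⟩ := h1
  rw [iInf_lt_iff] at h1
  obtain ⟨⟨hπp, hfst, hsnd⟩, hcost⟩ := h1
  have hintA : Integrable (fun t : ℝ => t) (empMeasure a) := integrable_id_empMeasure hN a
  have hfstm : Integrable (fun w : ℝ × ℝ => w.1) π :=
    (integrable_map_measure (f := Prod.fst) (g := fun t : ℝ => t)
      (by rw [hfst]; exact measurable_id.aestronglyMeasurable)
      measurable_fst.aemeasurable).mp (by rw [hfst]; exact hint)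
  have hsndm : Integrable (fun w : ℝ × ℝ => w.2) π :=
    (integrable_map_measure (f := Prod.snd) (g := fun t : ℝ => t)
      (by rw [hsnd]; exact measurable_id.aestronglyMeasurable)
      measurable_snd.aemeasurable).mp (by rw [hsnd]; exact hintA)
  have e1 : ∫ t, t ∂Q = ∫ w : ℝ × ℝ, w.1 ∂π := by
    rw [← hfst, integral_map measurable_fst.aemeasurable
      (by rw [hfst]; exact measurable_id.aestronglyMeasurable)]
  have e2 : ∫ t, t ∂empMeasure a = ∫ w : ℝ × ℝ, w.2 ∂π := by
    rw [← hsnd, integral_map measurable_snd.aemeasurable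
      (by rw [hsnd]; exact measurable_id.aestronglyMeasurable)]
  have habs : Integrable (fun w : ℝ × ℝ => |w.1 - w.2|) π := (hfstm.sub hsndm).abs
  have hcr : ∫ w : ℝ × ℝ, |w.1 - w.2| ∂π ≤ ε + δ := by
    rw [integral_eq_lintegral_of_nonneg_ae (ae_of_all _ fun w => abs_nonneg _)
      habs.aestronglyMeasurable]
    refine ENNReal.toReal_le_of_le_ofReal (by linarith) ?_
    refine le_of_lt (lt_of_le_of_lt (le_of_eq ?_) hcost)
    rw [transportCost]
    simp [Real.rpow_one]
  calc |(∫ t, t ∂Q) - ∫ t, t ∂empMeasure a| = |∫ w : ℝ × ℝ, (w.1 - w.2) ∂π| := by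
        rw [e1, e2, integral_sub hfstm hsndm]
    _ ≤ ∫ w : ℝ × ℝ, |w.1 - w.2| ∂π := by
        simpa using norm_integral_le_integral_norm (fun w : ℝ × ℝ => w.1 - w.2)
    _ ≤ ε + δ := hcr

lemma integral_le_of_subset_Iic {Q : Measure ℝ} (hprob : IsProbabilityMeasure Q)
    {S : Set ℝ} (hs : Q Sᶜ = 0) (hint : Integrable (fun t : ℝ => t) Q) {M : ℝ}
    (hS : S ⊆ Set.Iic M) : ∫ t, t ∂Q ≤ M := by
  have hae : ∀ᵐ t ∂Q, t ≤ M := by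
    rw [Filter.eventually_iff, mem_ae_iff]
    refine measure_mono_null (fun t ht hmem => ht (hS hmem)) hs
  calc ∫ t, t ∂Q ≤ ∫ _, M ∂Q := integral_mono_ae hint (integrable_const M) hae
    _ = M := by simp

lemma integral_ge_of_subset_Ici {Q : Measure ℝ} (hprob : IsProbabilityMeasure Q)
    {S : Set ℝ} (hs : Q Sᶜ = 0) (hint : Integrable (fun t : ℝ => t) Q) {M : ℝ}
    (hS : S ⊆ Set.Ici M) : M ≤ ∫ t, t ∂Q := by
  have hae : ∀ᵐ t ∂Q, M ≤ t := by
    rw [Filter.eventually_iff, mem_ae_iff]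
    refine measure_mono_null (fun t ht hmem => ht (hS hmem)) hs
  calc M = ∫ _, M ∂Q := by simp
    _ ≤ ∫ t, t ∂Q := integral_mono_ae (integrable_const M) hint hae

end ball

section ereal

lemma ereal_sSup_image {T : Set ℝ} (hne : T.Nonempty) (hbdd : BddAbove T) :
    sSup (Real.toEReal '' T) = ((sSup T : ℝ) : EReal) :=
  (Monotone.map_csSup_of_continuousAt continuous_coe_real_ereal.continuousAt
    (fun _ _ h => EReal.coe_le_coe_iff.2 h) hne hbdd).symm

lemma ereal_sInf_image {T : Set ℝ} (hne : T.Nonempty) (hbdd : BddBelow T) :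
    sInf (Real.toEReal '' T) = ((sInf T : ℝ) : EReal) :=
  (Monotone.map_csInf_of_continuousAt continuous_coe_real_ereal.continuousAt
    (fun _ _ h => EReal.coe_le_coe_iff.2 h) hne hbdd).symm

lemma ereal_sSup_image_top {T : Set ℝ} (h : ¬ BddAbove T) :
    sSup (Real.toEReal '' T) = ⊤ := by
  rw [sSup_eq_top]
  intro b hb
  induction b with
  | bot =>
    obtain ⟨t, ht, hlt⟩ := not_bddAbove_iff.1 h 0
    exact ⟨t, Set.mem_image_of_mem _ ht, by simp⟩
  | coe r =>
    obtain ⟨t, ht, hlt⟩ := not_bddAbove_iff.1 h r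
    exact ⟨t, Set.mem_image_of_mem _ ht, EReal.coe_lt_coe_iff.2 hlt⟩
  | top => exact absurd hb (lt_irrefl _)

lemma ereal_sInf_image_bot {T : Set ℝ} (h : ¬ BddBelow T) :
    sInf (Real.toEReal '' T) = ⊥ := by
  rw [sInf_eq_bot]
  intro b hb
  induction b with
  | bot => exact absurd hb (lt_irrefl _)
  | coe r =>
    obtain ⟨t, ht, hlt⟩ := not_bddBelow_iff.1 h r
    exact ⟨t, Set.mem_image_of_mem _ ht, EReal.coe_lt_coe_iff.2 hlt⟩
  | top =>
    obtain ⟨t, ht, hlt⟩ := not_bddBelow_iff.1 h 0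
    exact ⟨t, Set.mem_image_of_mem _ ht, by simp⟩

end ereal

section closure

lemma mem_closure_between {T : Set ℝ} (hT : T.OrdConnected) {t₁ z t₂ : ℝ}
    (h1 : t₁ ∈ T) (h2 : t₂ ∈ closure T) (h1z : t₁ ≤ z) (h2z : z ≤ t₂) :
    z ∈ closure T := by
  rcases eq_or_lt_of_le h2z with h | hlt
  · exact h ▸ h2
  · obtain ⟨t', ht', hd⟩ := Metric.mem_closure_iff.1 h2 (t₂ - z) (by linarith)
    have hzt' : z ≤ t' := by
      rw [Real.dist_eq, abs_lt] at hd; linarith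
    exact subset_closure (hT.out h1 ht' ⟨h1z, hzt'⟩)

lemma mem_closure_between' {T : Set ℝ} (hT : T.OrdConnected) {t₁ z t₂ : ℝ}
    (h1 : t₁ ∈ closure T) (h2 : t₂ ∈ T) (h1z : t₁ ≤ z) (h2z : z ≤ t₂) :
    z ∈ closure T := by
  rcases eq_or_lt_of_le h1z with h | hlt
  · exact h ▸ h1
  · obtain ⟨t', ht', hd⟩ := Metric.mem_closure_iff.1 h1 (z - t₁) (by linarith)
    have hzt' : t' ≤ z := by
      rw [Real.dist_eq, abs_lt] at hd; linarith
    exact subset_closure (hT.out ht' h2 ⟨hzt', h2z⟩)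

lemma sSup_closure_eq {T : Set ℝ} (hne : T.Nonempty) (hbdd : BddAbove T) :
    sSup (closure T) = sSup T :=
  le_antisymm
    (csSup_le (hne.closure) (fun t ht =>
      (isClosed_Iic.closure_subset_iff.2 (fun u hu => le_csSup hbdd hu)) ht))
    (csSup_le_csSup hbdd.closure hne subset_closure)

lemma sInf_closure_eq {T : Set ℝ} (hne : T.Nonempty) (hbdd : BddBelow T) :
    sInf (closure T) = sInf T :=
  le_antisymm
    (csInf_le_csInf hbdd.closure hne subset_closure)
    (le_csInf (hne.closure) (fun t ht =>
      (isClosed_Ici.closure_subset_iff.2 (fun u hu => csInf_le hbdd hu)) ht))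

end closure

section main
variable {N : ℕ}

lemma integrable_of_mem_ball {S : Set ℝ} {ν : Measure ℝ} {ε : ℝ} {Q : Measure ℝ}
    (hQ : Q ∈ realWassersteinBall 1 S ν ε) : Integrable (fun t : ℝ => t) Q := by
  obtain ⟨_, _, hmom, _⟩ := hQ
  refine ⟨measurable_id.aestronglyMeasurable, ?_⟩
  rw [HasFiniteIntegral]
  simpa [Real.enorm_eq_ofReal_abs, Real.rpow_one] using hmom

lemma avg_const (hN : 0 < N) (x : ℝ) : (1 / (N : ℝ)) * ∑ _i : Fin N, x = x := by
  have hNpos : (0 : ℝ) < N := by exact_mod_cast hN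
  rw [Finset.sum_const, Finset.card_univ, Fintype.card_fin, nsmul_eq_mul]
  field_simp

lemma avg_min_le (hN : 0 < N) (a : Fin N → ℝ) {i₀ : Fin N} (hi₀ : ∀ j, a i₀ ≤ a j) :
    a i₀ ≤ (1 / (N : ℝ)) * ∑ i, a i := by
  calc a i₀ = (1 / (N : ℝ)) * ∑ _i : Fin N, a i₀ := (avg_const hN _).symm
    _ ≤ (1 / (N : ℝ)) * ∑ i, a i := by
        refine mul_le_mul_of_nonneg_left (Finset.sum_le_sum fun i _ => hi₀ i) (by positivity)

lemma avg_le_max (hN : 0 < N) (a : Fin N → ℝ) {i₀ : Fin N} (hi₀ : ∀ j, a j ≤ a i₀) :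
    (1 / (N : ℝ)) * ∑ i, a i ≤ a i₀ := by
  calc (1 / (N : ℝ)) * ∑ i, a i ≤ (1 / (N : ℝ)) * ∑ _i : Fin N, a i₀ := by
        refine mul_le_mul_of_nonneg_left (Finset.sum_le_sum fun i _ => hi₀ i) (by positivity)
    _ = a i₀ := avg_const hN _

lemma sSup_ball_eq (hN : 0 < N) {T : Set ℝ} (hT : T.OrdConnected) (a : Fin N → ℝ)
    (ha : ∀ i, a i ∈ T) {ε : ℝ} (hε : 0 < ε) :
    sSup ((fun Q : Measure ℝ => ((∫ t, t ∂Q : ℝ) : EReal)) ''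
      realWassersteinBall 1 (closure T) (empMeasure a) ε)
    = min (((1 / (N : ℝ)) * ∑ i, a i + ε : ℝ) : EReal) (sSup (Real.toEReal '' T)) := by
  set m : ℝ := (1 / (N : ℝ)) * ∑ i, a i with hm
  have hne : T.Nonempty := ⟨a ⟨0, hN⟩, ha _⟩
  -- upper bound for every element of the ball
  have hub : ∀ v ∈ (fun Q : Measure ℝ => ((∫ t, t ∂Q : ℝ) : EReal)) ''
      realWassersteinBall 1 (closure T) (empMeasure a) ε,
      v ≤ min ((m + ε : ℝ) : EReal) (sSup (Real.toEReal '' T)) := by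
    rintro v ⟨Q, hQ, rfl⟩
    refine le_min ?_ ?_
    · refine EReal.coe_le_coe_iff.2 ?_
      have h := abs_integral_sub_le hN a hε.le hQ
      rw [abs_le] at h
      linarith [h.1, h.2]
    · by_cases hbdd : BddAbove T
      · rw [ereal_sSup_image hne hbdd]
        refine EReal.coe_le_coe_iff.2 ?_
        exact integral_le_of_subset_Iic hQ.1 hQ.2.1 (integrable_of_mem_ball hQ)
          (isClosed_Iic.closure_subset_iff.2 fun u hu => le_csSup hbdd hu)
      · rw [ereal_sSup_image_top hbdd]; exact le_top
  obtain ⟨i₀, -, hi₀⟩ := Finset.exists_min_image Finset.univ a ⟨⟨0, hN⟩, Finset.mem_univ _⟩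
  have hi₀' : ∀ j, a i₀ ≤ a j := fun j => hi₀ j (Finset.mem_univ j)
  have hmin : a i₀ ≤ m := avg_min_le hN a hi₀'
  -- construction of the optimal measure when the interval reaches m + ε
  have construct : (∀ z, a i₀ ≤ z → z ≤ m + ε → z ∈ closure T) →
      ∃ Q ∈ realWassersteinBall 1 (closure T) (empMeasure a) ε,
        (∫ t, t ∂Q : ℝ) = m + ε := by
    intro hgood
    set f : ℝ → ℝ := fun c => (1 / (N : ℝ)) * ∑ i, max (a i) c with hf
    have hfc : Continuous f := continuous_const.mul
      (continuous_finset_sum _ fun i _ => continuous_const.max continuous_id)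
    have hf1 : f (a i₀) = m := by
      rw [hf, hm]
      simp only
      congr 1
      exact Finset.sum_congr rfl fun i _ => max_eq_left (hi₀' i)
    have hf2 : m + ε ≤ f (m + ε) := by
      calc m + ε = (1 / (N : ℝ)) * ∑ _i : Fin N, (m + ε) := (avg_const hN _).symm
        _ ≤ f (m + ε) := mul_le_mul_of_nonneg_left
            (Finset.sum_le_sum fun i _ => le_max_right _ _) (by positivity)
    obtain ⟨c, hcmem, hfceq⟩ := intermediate_value_Icc (by linarith : a i₀ ≤ m + ε)
      hfc.continuousOn (show m + ε ∈ Set.Icc (f (a i₀)) (f (m + ε)) from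
        ⟨by rw [hf1]; linarith, hf2⟩)
    refine ⟨empMeasure (fun i => max (a i) c),
      emp_mem_ball hN isClosed_closure.measurableSet _ a ?_ ?_, ?_⟩
    · intro i
      rcases le_total c (a i) with h | h
      · rw [max_eq_left h]; exact subset_closure (ha i)
      · rw [max_eq_right h]; exact hgood c hcmem.1 hcmem.2
    · have habs : ∀ i : Fin N, |max (a i) c - a i| = max (a i) c - a i :=
        fun i => abs_of_nonneg (by simp [le_max_left])
      have : (1 / (N : ℝ)) * ∑ i, |max (a i) c - a i| = ε := by
        rw [Finset.sum_congr rfl fun i _ => habs i, Finset.sum_sub_distrib, mul_sub, ← hm]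
        have : (1 / (N : ℝ)) * ∑ i, max (a i) c = m + ε := hfceq
        rw [this]; ring
      exact le_of_eq this
    · rw [integral_empMeasure hN]; exact hfceq
  -- case analysis
  have key : ∃ Q ∈ realWassersteinBall 1 (closure T) (empMeasure a) ε,
      ((∫ t, t ∂Q : ℝ) : EReal) = min ((m + ε : ℝ) : EReal) (sSup (Real.toEReal '' T)) := by
    by_cases hb : BddAbove T
    · rcases le_or_gt (m + ε) (sSup T) with hle | hlt
      · obtain ⟨Q, hQ, hval⟩ := construct (fun z h1 h2 =>
          mem_closure_between hT (ha i₀) (csSup_mem_closure hne hb) h1 (h2.trans hle))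
        refine ⟨Q, hQ, ?_⟩
        rw [hval, ereal_sSup_image hne hb,
          min_eq_left (EReal.coe_le_coe_iff.2 hle)]
      · set s := sSup T with hs
        have hsa : ∀ i, a i ≤ s := fun i => le_csSup hb (ha i)
        have hms : m ≤ s := by
          rw [hm]
          refine le_trans (mul_le_mul_of_nonneg_left
            (Finset.sum_le_sum fun i _ => hsa i) (by positivity))
            (le_of_eq (avg_const hN s))
        refine ⟨empMeasure (fun _ => s),
          emp_mem_ball hN isClosed_closure.measurableSet _ a
            (fun i => csSup_mem_closure hne hb) ?_, ?_⟩
        · have habs : ∀ i : Fin N, |s - a i| = s - a i :=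
            fun i => abs_of_nonneg (by linarith [hsa i])
          have : (1 / (N : ℝ)) * ∑ i, |s - a i| = s - m := by
            rw [Finset.sum_congr rfl fun i _ => habs i, Finset.sum_sub_distrib, mul_sub, ← hm,
              avg_const hN]
          rw [this]; linarith
        · rw [integral_empMeasure hN, avg_const hN, ereal_sSup_image hne hb,
            min_eq_right (EReal.coe_le_coe_iff.2 hlt.le)]
    · obtain ⟨Q, hQ, hval⟩ := construct (fun z h1 _h2 => by
        obtain ⟨t, ht, hlt'⟩ := not_bddAbove_iff.1 hb z
        exact subset_closure (hT.out (ha i₀) ht ⟨h1, hlt'.le⟩))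
      refine ⟨Q, hQ, ?_⟩
      rw [hval, min_eq_left (by rw [ereal_sSup_image_top hb]; exact le_top)]
  obtain ⟨Q, hQ, hval⟩ := key
  refine le_antisymm (sSup_le hub) ?_
  rw [← hval]
  exact le_sSup (Set.mem_image_of_mem _ hQ)

end main

section main2
variable {N : ℕ}

lemma sInf_ball_eq (hN : 0 < N) {T : Set ℝ} (hT : T.OrdConnected) (a : Fin N → ℝ)
    (ha : ∀ i, a i ∈ T) {ε : ℝ} (hε : 0 < ε) :
    sInf ((fun Q : Measure ℝ => ((∫ t, t ∂Q : ℝ) : EReal)) ''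
      realWassersteinBall 1 (closure T) (empMeasure a) ε)
    = max (((1 / (N : ℝ)) * ∑ i, a i - ε : ℝ) : EReal) (sInf (Real.toEReal '' T)) := by
  set m : ℝ := (1 / (N : ℝ)) * ∑ i, a i with hm
  have hne : T.Nonempty := ⟨a ⟨0, hN⟩, ha _⟩
  have hlb : ∀ v ∈ (fun Q : Measure ℝ => ((∫ t, t ∂Q : ℝ) : EReal)) ''
      realWassersteinBall 1 (closure T) (empMeasure a) ε,
      max ((m - ε : ℝ) : EReal) (sInf (Real.toEReal '' T)) ≤ v := by
    rintro v ⟨Q, hQ, rfl⟩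
    refine max_le ?_ ?_
    · refine EReal.coe_le_coe_iff.2 ?_
      have h := abs_integral_sub_le hN a hε.le hQ
      rw [abs_le] at h
      linarith [h.1, h.2]
    · by_cases hbdd : BddBelow T
      · rw [ereal_sInf_image hne hbdd]
        refine EReal.coe_le_coe_iff.2 ?_
        exact integral_ge_of_subset_Ici hQ.1 hQ.2.1 (integrable_of_mem_ball hQ)
          (isClosed_Ici.closure_subset_iff.2 fun u hu => csInf_le hbdd hu)
      · rw [ereal_sInf_image_bot hbdd]; exact bot_le
  obtain ⟨i₀, -, hi₀⟩ := Finset.exists_max_image Finset.univ a ⟨⟨0, hN⟩, Finset.mem_univ _⟩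
  have hi₀' : ∀ j, a j ≤ a i₀ := fun j => hi₀ j (Finset.mem_univ j)
  have hmax : m ≤ a i₀ := avg_le_max hN a hi₀'
  have construct : (∀ z, m - ε ≤ z → z ≤ a i₀ → z ∈ closure T) →
      ∃ Q ∈ realWassersteinBall 1 (closure T) (empMeasure a) ε,
        (∫ t, t ∂Q : ℝ) = m - ε := by
    intro hgood
    set f : ℝ → ℝ := fun c => (1 / (N : ℝ)) * ∑ i, min (a i) c with hf
    have hfc : Continuous f := continuous_const.mul
      (continuous_finset_sum _ fun i _ => continuous_const.min continuous_id)
    have hf1 : f (a i₀) = m := by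
      rw [hf, hm]
      simp only
      congr 1
      exact Finset.sum_congr rfl fun i _ => min_eq_left (hi₀' i)
    have hf2 : f (m - ε) ≤ m - ε := by
      calc f (m - ε) ≤ (1 / (N : ℝ)) * ∑ _i : Fin N, (m - ε) := mul_le_mul_of_nonneg_left
            (Finset.sum_le_sum fun i _ => min_le_right _ _) (by positivity)
        _ = m - ε := avg_const hN _
    obtain ⟨c, hcmem, hfceq⟩ := intermediate_value_Icc (by linarith : m - ε ≤ a i₀)
      hfc.continuousOn (show m - ε ∈ Set.Icc (f (m - ε)) (f (a i₀)) from
        ⟨hf2, by rw [hf1]; linarith⟩)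
    refine ⟨empMeasure (fun i => min (a i) c),
      emp_mem_ball hN isClosed_closure.measurableSet _ a ?_ ?_, ?_⟩
    · intro i
      rcases le_total (a i) c with h | h
      · rw [min_eq_left h]; exact subset_closure (ha i)
      · rw [min_eq_right h]; exact hgood c hcmem.1 hcmem.2
    · have habs : ∀ i : Fin N, |min (a i) c - a i| = a i - min (a i) c :=
        fun i => by rw [abs_sub_comm]; exact abs_of_nonneg (by simp [min_le_left])
      have : (1 / (N : ℝ)) * ∑ i, |min (a i) c - a i| = ε := by
        rw [Finset.sum_congr rfl fun i _ => habs i, Finset.sum_sub_distrib, mul_sub, ← hm]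
        have : (1 / (N : ℝ)) * ∑ i, min (a i) c = m - ε := hfceq
        rw [this]; ring
      exact le_of_eq this
    · rw [integral_empMeasure hN]; exact hfceq
  have key : ∃ Q ∈ realWassersteinBall 1 (closure T) (empMeasure a) ε,
      ((∫ t, t ∂Q : ℝ) : EReal) = max ((m - ε : ℝ) : EReal) (sInf (Real.toEReal '' T)) := by
    by_cases hb : BddBelow T
    · rcases le_or_gt (sInf T) (m - ε) with hle | hlt
      · obtain ⟨Q, hQ, hval⟩ := construct (fun z h1 h2 =>
          mem_closure_between' hT (csInf_mem_closure hne hb) (ha i₀) (hle.trans h1) h2)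
        refine ⟨Q, hQ, ?_⟩
        rw [hval, ereal_sInf_image hne hb,
          max_eq_left (EReal.coe_le_coe_iff.2 hle)]
      · set s := sInf T with hs
        have hsa : ∀ i, s ≤ a i := fun i => csInf_le hb (ha i)
        have hms : s ≤ m := by
          rw [hm]
          refine le_trans (le_of_eq (avg_const hN s).symm)
            (mul_le_mul_of_nonneg_left
              (Finset.sum_le_sum fun i _ => hsa i) (by positivity))
        refine ⟨empMeasure (fun _ => s),
          emp_mem_ball hN isClosed_closure.measurableSet _ a
            (fun i => csInf_mem_closure hne hb) ?_, ?_⟩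
        · have habs : ∀ i : Fin N, |s - a i| = a i - s :=
            fun i => by rw [abs_sub_comm]; exact abs_of_nonneg (by linarith [hsa i])
          have : (1 / (N : ℝ)) * ∑ i, |s - a i| = m - s := by
            rw [Finset.sum_congr rfl fun i _ => habs i, Finset.sum_sub_distrib, mul_sub, ← hm,
              avg_const hN]
          rw [this]; linarith
        · rw [integral_empMeasure hN, avg_const hN, ereal_sInf_image hne hb,
            max_eq_right (EReal.coe_le_coe_iff.2 hlt.le)]
    · obtain ⟨Q, hQ, hval⟩ := construct (fun z _h1 h2 => by
        obtain ⟨t, ht, hlt'⟩ := not_bddBelow_iff.1 hb z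
        exact subset_closure (hT.out ht (ha i₀) ⟨hlt'.le, h2⟩))
      refine ⟨Q, hQ, ?_⟩
      rw [hval, max_eq_left (by rw [ereal_sInf_image_bot hb]; exact bot_le)]
  obtain ⟨Q, hQ, hval⟩ := key
  refine le_antisymm ?_ (le_sInf hlb)
  rw [← hval]
  exact sInf_le (Set.mem_image_of_mem _ hQ)

end main2

/-- Reformulation of the decision-dependent DRO problem with expected-value
objective and expected-value constraint, `p = 1`, interval images (Theorem 2(a)). -/
theorem statement2 {n m N : ℕ} (hN : 0 < N)
    (Ξ : Set (Fin n → ℝ)) (q : ℝ) (hq : 1 ≤ q)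
    (ξh : Fin N → Fin n → ℝ) (hξh : ∀ i, ξh i ∈ Ξ)
    (𝒳 : Set (Fin m → ℝ))
    (F G : (Fin m → ℝ) → (Fin n → ℝ) → ℝ) (γF γG : (Fin m → ℝ) → ℝ)
    (hγF : ∀ x ∈ 𝒳, 0 < γF x) (hγG : ∀ x ∈ 𝒳, 0 < γG x)
    (hF : ∀ x ξ ζ, |F x ξ - F x ζ| ≤ γF x * qnorm q (ξ - ζ))
    (hG : ∀ x ξ ζ, |G x ξ - G x ζ| ≤ γG x * qnorm q (ξ - ζ))
    (hFint : ∀ x ∈ 𝒳, (F x '' Ξ).OrdConnected)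
    (hGint : ∀ x ∈ 𝒳, (G x '' Ξ).OrdConnected)
    (ε : ℝ) (hε : 0 < ε) (μ : ℝ) :
    sInf {v : EReal | ∃ x ∈ 𝒳,
        ((μ : EReal) ≤ sInf ((fun Q : Measure ℝ => ((∫ t, t ∂Q : ℝ) : EReal)) ''
          realWassersteinBall 1 (closure (G x '' Ξ))
            (empMeasure fun i => G x (ξh i)) (ε * γG x))) ∧
        v = sSup ((fun Q : Measure ℝ => ((∫ t, t ∂Q : ℝ) : EReal)) ''
          realWassersteinBall 1 (closure (F x '' Ξ))
            (empMeasure fun i => F x (ξh i)) (ε * γF x))} =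
    sInf {v : EReal | ∃ x ∈ 𝒳,
        ((μ : EReal) ≤ max (((1 / (N : ℝ)) * ∑ i, G x (ξh i) - ε * γG x : ℝ) : EReal)
          (sInf ((fun ξ => ((G x ξ : ℝ) : EReal)) '' Ξ))) ∧
        v = min (((1 / (N : ℝ)) * ∑ i, F x (ξh i) + ε * γF x : ℝ) : EReal)
          (sSup ((fun ξ => ((F x ξ : ℝ) : EReal)) '' Ξ))} := by
  have keyG : ∀ x ∈ 𝒳,
      sInf ((fun Q : Measure ℝ => ((∫ t, t ∂Q : ℝ) : EReal)) ''
        realWassersteinBall 1 (closure (G x '' Ξ))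
          (empMeasure fun i => G x (ξh i)) (ε * γG x))
      = max (((1 / (N : ℝ)) * ∑ i, G x (ξh i) - ε * γG x : ℝ) : EReal)
          (sInf ((fun ξ => ((G x ξ : ℝ) : EReal)) '' Ξ)) := by
    intro x hx
    rw [sInf_ball_eq hN (hGint x hx) (fun i => G x (ξh i))
      (fun i => ⟨ξh i, hξh i, rfl⟩) (mul_pos hε (hγG x hx)), Set.image_image]
  have keyF : ∀ x ∈ 𝒳,
      sSup ((fun Q : Measure ℝ => ((∫ t, t ∂Q : ℝ) : EReal)) ''
        realWassersteinBall 1 (closure (F x '' Ξ))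
          (empMeasure fun i => F x (ξh i)) (ε * γF x))
      = min (((1 / (N : ℝ)) * ∑ i, F x (ξh i) + ε * γF x : ℝ) : EReal)
          (sSup ((fun ξ => ((F x ξ : ℝ) : EReal)) '' Ξ)) := by
    intro x hx
    rw [sSup_ball_eq hN (hFint x hx) (fun i => F x (ξh i))
      (fun i => ⟨ξh i, hξh i, rfl⟩) (mul_pos hε (hγF x hx)), Set.image_image]
  congr 1
  ext v
  simp only [Set.mem_setOf_eq]
  constructor
  · rintro ⟨x, hx, hcon, hv⟩
    exact ⟨x, hx, by rw [← keyG x hx]; exact hcon, by rw [hv, keyF x hx]⟩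
  · rintro ⟨x, hx, hcon, hv⟩
    exact ⟨x, hx, by rw [keyG x hx]; exact hcon, by rw [hv, ← keyF x hx]⟩
end

section
/- Let Ξ ⊆ ℝⁿ, p, q ∈ [1,∞), ξ̂₁,…,ξ̂_N ∈ Ξ with empirical distribution P̂_N, let ℙ be a probability measure on Ξ with finite p-th moment, μ ∈ ℝ, and let G : ℝᵐ × ℝⁿ → ℝ be q-Lipschitz in ξ with constant γ_{x,G,q}. Let ε > 0 satisfy W_p(P̂_N, ℙ) ≤ ε, where W_p uses cost ‖·‖_q on Ξ. If x ∈ ℝᵐ satisfies inf{ E_{ζ∼Q}[ζ] : Q a probability measure on ℝ with finite p-th moment and W_p(Q, P̂^{x,G}_N) ≤ ε γ_{x,G,q} } ≥ μ, where this W_p uses cost |·| on ℝ, then E_{ξ∼ℙ}[G(x,ξ)] ≥ μ. -/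
open MeasureTheory
open scoped ENNReal

lemma qnorm_nonneg (q : ℝ) {n : ℕ} (v : Fin n → ℝ) : 0 ≤ qnorm q v :=
  Real.rpow_nonneg (Finset.sum_nonneg fun _ _ => Real.rpow_nonneg (abs_nonneg _) q) _

lemma qnorm_continuous {q : ℝ} (hq : 1 ≤ q) {n : ℕ} : Continuous (qnorm q (n := n)) := by
  unfold qnorm
  apply Continuous.rpow_const
  · exact continuous_finset_sum _ fun i _ =>
      ((continuous_apply i).abs).rpow_const (fun v => Or.inr (by linarith))
  · intro v; right; positivity

lemma qnorm_zero {q : ℝ} (hq : 1 ≤ q) {n : ℕ} : qnorm q (0 : Fin n → ℝ) = 0 := by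
  have hq0 : q ≠ 0 := by linarith
  simp [qnorm, Real.zero_rpow hq0, one_div, Real.zero_rpow (inv_ne_zero hq0)]

lemma qnorm_sub_comm (q : ℝ) {n : ℕ} (a b : Fin n → ℝ) :
    qnorm q (a - b) = qnorm q (b - a) := by
  unfold qnorm
  congr 1
  refine Finset.sum_congr rfl fun i _ => ?_
  rw [Pi.sub_apply, Pi.sub_apply, abs_sub_comm]

lemma cont_of_lip {q : ℝ} (hq : 1 ≤ q) {n : ℕ} (g : (Fin n → ℝ) → ℝ) (γ : ℝ)
    (h : ∀ ξ ζ, |g ξ - g ζ| ≤ γ * qnorm q (ξ - ζ)) : Continuous g := by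
  rw [continuous_iff_continuousAt]
  intro ζ
  rw [ContinuousAt, tendsto_iff_dist_tendsto_zero]
  apply squeeze_zero (fun t => dist_nonneg) (g := fun ξ => γ * qnorm q (ξ - ζ))
  · intro ξ
    rw [Real.dist_eq]
    exact h ξ ζ
  · have hc : Continuous fun ξ => γ * qnorm q (ξ - ζ) :=
      continuous_const.mul ((qnorm_continuous hq).comp (continuous_id.sub continuous_const))
    have h0 : γ * qnorm q (ζ - ζ) = 0 := by simp [qnorm_zero hq]
    rw [← h0]
    simpa using hc.tendsto ζ

lemma empMeasure_map {α β : Type*} [MeasurableSpace α] [MeasurableSpace β] {N : ℕ}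
    (ξ : Fin N → α) {f : α → β} (hf : Measurable f) :
    (empMeasure ξ).map f = empMeasure (fun i => f (ξ i)) := by
  ext s hs
  rw [Measure.map_apply hf hs]
  simp only [empMeasure, Measure.smul_apply, Measure.finset_sum_apply, smul_eq_mul]
  congr 1
  refine Finset.sum_congr rfl fun i _ => ?_
  rw [Measure.dirac_apply' _ (hf hs), Measure.dirac_apply' _ hs]
  rfl

lemma rpow_add_le {p : ℝ} (hp : 1 ≤ p) {a b : ℝ} (ha : 0 ≤ a) (hb : 0 ≤ b) :
    (a + b) ^ p ≤ 2 ^ p * (a ^ p + b ^ p) := by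
  have hp0 : 0 ≤ p := by linarith
  have h1 : a + b ≤ 2 * max a b := by
    rcases le_total a b with h | h
    · calc a + b ≤ b + b := by linarith
        _ = 2 * b := by ring
        _ ≤ 2 * max a b := by gcongr; exact le_max_right a b
    · calc a + b ≤ a + a := by linarith
        _ = 2 * a := by ring
        _ ≤ 2 * max a b := by gcongr; exact le_max_left a b
  calc (a + b) ^ p ≤ (2 * max a b) ^ p :=
        Real.rpow_le_rpow (by linarith) h1 hp0
    _ = 2 ^ p * (max a b) ^ p := Real.mul_rpow (by norm_num) (le_max_of_le_left ha)
    _ ≤ 2 ^ p * (a ^ p + b ^ p) := by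
        gcongr
        rcases le_total a b with h | h
        · rw [max_eq_right h]; nlinarith [Real.rpow_nonneg ha p]
        · rw [max_eq_left h]; nlinarith [Real.rpow_nonneg hb p]


/-- If the true distribution lies in the `ε`-Wasserstein ball around the empirical
distribution, any decision feasible for the decision-dependent robust constraint
satisfies the true expected-value constraint (Lemma on confidence). -/
theorem statement9 {n m N : ℕ} (hN : 0 < N)
    (Ξ : Set (Fin n → ℝ)) (p q : ℝ) (hp : 1 ≤ p) (hq : 1 ≤ q)
    (ξh : Fin N → Fin n → ℝ) (hξh : ∀ i, ξh i ∈ Ξ)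
    (ℙtrue : Measure (Fin n → ℝ)) (hℙ : IsProbabilityMeasure ℙtrue)
    (hℙΞ : ℙtrue Ξᶜ = 0)
    (hℙmom : ∃ ζ₀ ∈ Ξ, ∫⁻ ξ, ENNReal.ofReal (qnorm q (ξ - ζ₀) ^ p) ∂ℙtrue < ⊤)
    (μ : ℝ)
    (G : (Fin m → ℝ) → (Fin n → ℝ) → ℝ) (γG : (Fin m → ℝ) → ℝ)
    (hγG : ∀ x, 0 < γG x)
    (hG : ∀ x ξ ζ, |G x ξ - G x ζ| ≤ γG x * qnorm q (ξ - ζ))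
    (ε : ℝ) (hε : 0 < ε)
    (hball : wassersteinDist p (fun a b => qnorm q (a - b)) (empMeasure ξh) ℙtrue ≤
      ENNReal.ofReal ε)
    (x : Fin m → ℝ)
    (hx : (μ : EReal) ≤ sInf ((fun Q : Measure ℝ => ((∫ t, t ∂Q : ℝ) : EReal)) ''
      realWassersteinBall p Set.univ (empMeasure fun i => G x (ξh i)) (ε * γG x))) :
    μ ≤ ∫ ξ, G x ξ ∂ℙtrue := by
  have hp0 : 0 < p := by linarith
  have hγ := hγG x
  have hGcont : Continuous (G x) := cont_of_lip hq (G x) (γG x) (hG x)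
  have hGmeas : Measurable (G x) := hGcont.measurable
  set Q : Measure ℝ := ℙtrue.map (G x) with hQdef
  -- Q is a probability measure
  have hQprob : IsProbabilityMeasure Q := Measure.isProbabilityMeasure_map hGmeas.aemeasurable
  -- moment bound
  obtain ⟨ζ₀, hζ₀, hmom⟩ := hℙmom
  have hmeas_qn : Measurable fun ξ : Fin n → ℝ => ENNReal.ofReal (qnorm q (ξ - ζ₀) ^ p) := by
    apply Measurable.ennreal_ofReal
    exact (((qnorm_continuous hq).comp (continuous_id.sub continuous_const)).rpow_const
      (fun v => Or.inr hp0.le)).measurable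
  have hQmom : (∫⁻ t, ENNReal.ofReal (|t| ^ p) ∂Q) < ⊤ := by
    rw [hQdef, lintegral_map (by
      apply Measurable.ennreal_ofReal
      exact (continuous_abs.rpow_const (fun v => Or.inr hp0.le)).measurable) hGmeas]
    have hbd : ∀ ξ, ENNReal.ofReal (|G x ξ| ^ p) ≤
        ENNReal.ofReal (2 ^ p * |G x ζ₀| ^ p) +
        ENNReal.ofReal (2 ^ p * γG x ^ p) * ENNReal.ofReal (qnorm q (ξ - ζ₀) ^ p) := by
      intro ξ
      have h1 : |G x ξ| ≤ |G x ζ₀| + γG x * qnorm q (ξ - ζ₀) := by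
        have := hG x ξ ζ₀
        have := abs_sub_abs_le_abs_sub (G x ξ) (G x ζ₀)
        linarith
      have h2 : |G x ξ| ^ p ≤ 2 ^ p * (|G x ζ₀| ^ p + (γG x * qnorm q (ξ - ζ₀)) ^ p) := by
        calc |G x ξ| ^ p ≤ (|G x ζ₀| + γG x * qnorm q (ξ - ζ₀)) ^ p :=
              Real.rpow_le_rpow (abs_nonneg _) h1 hp0.le
          _ ≤ 2 ^ p * (|G x ζ₀| ^ p + (γG x * qnorm q (ξ - ζ₀)) ^ p) :=
              rpow_add_le hp (abs_nonneg _) (mul_nonneg hγ.le (qnorm_nonneg _ _))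
      have h3 : (γG x * qnorm q (ξ - ζ₀)) ^ p = γG x ^ p * qnorm q (ξ - ζ₀) ^ p :=
        Real.mul_rpow hγ.le (qnorm_nonneg _ _)
      have h2γ : (0:ℝ) ≤ 2 ^ p * γG x ^ p :=
        mul_nonneg (Real.rpow_nonneg (by norm_num) p) (Real.rpow_nonneg hγ.le p)
      calc ENNReal.ofReal (|G x ξ| ^ p)
          ≤ ENNReal.ofReal (2 ^ p * |G x ζ₀| ^ p + 2 ^ p * γG x ^ p * qnorm q (ξ - ζ₀) ^ p) := by
            apply ENNReal.ofReal_le_ofReal; rw [h3] at h2; linarith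
        _ ≤ ENNReal.ofReal (2 ^ p * |G x ζ₀| ^ p) +
            ENNReal.ofReal (2 ^ p * γG x ^ p * qnorm q (ξ - ζ₀) ^ p) := ENNReal.ofReal_add_le
        _ = ENNReal.ofReal (2 ^ p * |G x ζ₀| ^ p) +
            ENNReal.ofReal (2 ^ p * γG x ^ p) * ENNReal.ofReal (qnorm q (ξ - ζ₀) ^ p) := by
            rw [ENNReal.ofReal_mul h2γ]
    calc (∫⁻ ξ, ENNReal.ofReal (|G x ξ| ^ p) ∂ℙtrue)
        ≤ ∫⁻ ξ, (ENNReal.ofReal (2 ^ p * |G x ζ₀| ^ p) +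
            ENNReal.ofReal (2 ^ p * γG x ^ p) * ENNReal.ofReal (qnorm q (ξ - ζ₀) ^ p)) ∂ℙtrue :=
          lintegral_mono hbd
      _ = ENNReal.ofReal (2 ^ p * |G x ζ₀| ^ p) * ℙtrue Set.univ +
          ENNReal.ofReal (2 ^ p * γG x ^ p) *
            ∫⁻ ξ, ENNReal.ofReal (qnorm q (ξ - ζ₀) ^ p) ∂ℙtrue := by
          rw [lintegral_add_left (measurable_const), lintegral_const,
            lintegral_const_mul _ hmeas_qn]
      _ < ⊤ := by
          apply ENNReal.add_lt_top.2
          constructor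
          · exact ENNReal.mul_lt_top ENNReal.ofReal_lt_top (measure_lt_top _ _)
          · exact ENNReal.mul_lt_top ENNReal.ofReal_lt_top hmom
  -- Wasserstein bound
  have hWQ : wassersteinDist p (fun a b => |a - b|) Q (empMeasure fun i => G x (ξh i)) ≤
      ENNReal.ofReal (ε * γG x) := by
    set c : ℝ≥0∞ := ENNReal.ofReal (γG x) ^ p with hc
    have hc0 : c ≠ 0 := by
      rw [hc]
      simp only [ne_eq, ENNReal.rpow_eq_zero_iff, not_or]
      constructor
      · rintro ⟨h1, -⟩; exact absurd h1 (by simp [ENNReal.ofReal_eq_zero, not_le, hγ])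
      · rintro ⟨h1, -⟩; exact ENNReal.ofReal_ne_top h1
    have hctop : c ≠ ⊤ := by
      rw [hc]
      exact ENNReal.rpow_ne_top_of_nonneg hp0.le ENNReal.ofReal_ne_top
    -- from hball
    have h1 : (⨅ (π : Measure ((Fin n → ℝ) × (Fin n → ℝ))) (_ : IsProbabilityMeasure π ∧
        π.map Prod.fst = empMeasure ξh ∧ π.map Prod.snd = ℙtrue),
        transportCost p (fun a b => qnorm q (a - b)) π) ≤ ENNReal.ofReal ε ^ p := by
      have h := ENNReal.rpow_le_rpow hball hp0.le
      rwa [wassersteinDist, ← ENNReal.rpow_mul, one_div, inv_mul_cancel₀ hp0.ne',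
        ENNReal.rpow_one] at h
    -- pushforward of each coupling
    have h2 : ∀ π : Measure ((Fin n → ℝ) × (Fin n → ℝ)), (IsProbabilityMeasure π ∧
        π.map Prod.fst = empMeasure ξh ∧ π.map Prod.snd = ℙtrue) →
        (⨅ (π' : Measure (ℝ × ℝ)) (_ : IsProbabilityMeasure π' ∧
          π'.map Prod.fst = Q ∧ π'.map Prod.snd = empMeasure fun i => G x (ξh i)),
          transportCost p (fun a b => |a - b|) π') ≤
        c * transportCost p (fun a b => qnorm q (a - b)) π := by
      rintro π ⟨hπ1, hπ2, hπ3⟩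
      have hF : Measurable fun w : (Fin n → ℝ) × (Fin n → ℝ) => (G x w.2, G x w.1) :=
        (hGmeas.comp measurable_snd).prodMk (hGmeas.comp measurable_fst)
      set π' : Measure (ℝ × ℝ) := π.map (fun w => (G x w.2, G x w.1)) with hπ'
      have hfeas : IsProbabilityMeasure π' ∧
          π'.map Prod.fst = Q ∧ π'.map Prod.snd = empMeasure fun i => G x (ξh i) := by
        refine ⟨Measure.isProbabilityMeasure_map hF.aemeasurable, ?_, ?_⟩
        · rw [hπ', Measure.map_map measurable_fst hF]
          have : (Prod.fst ∘ fun w : (Fin n → ℝ) × (Fin n → ℝ) => (G x w.2, G x w.1)) =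
              (G x) ∘ Prod.snd := rfl
          rw [this, ← Measure.map_map hGmeas measurable_snd, hπ3, hQdef]
        · rw [hπ', Measure.map_map measurable_snd hF]
          have : (Prod.snd ∘ fun w : (Fin n → ℝ) × (Fin n → ℝ) => (G x w.2, G x w.1)) =
              (G x) ∘ Prod.fst := rfl
          rw [this, ← Measure.map_map hGmeas measurable_fst, hπ2, empMeasure_map _ hGmeas]
      refine le_trans (iInf₂_le π' hfeas) ?_
      have hmeasint : Measurable fun w : ℝ × ℝ => ENNReal.ofReal (|w.1 - w.2| ^ p) := by
        apply Measurable.ennreal_ofReal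
        exact ((continuous_fst.sub continuous_snd).abs.rpow_const
          (fun v => Or.inr hp0.le)).measurable
      have hmeascost : Measurable fun w : (Fin n → ℝ) × (Fin n → ℝ) =>
          ENNReal.ofReal (qnorm q (w.1 - w.2) ^ p) := by
        apply Measurable.ennreal_ofReal
        exact (((qnorm_continuous hq).comp (continuous_fst.sub continuous_snd)).rpow_const
          (fun v => Or.inr hp0.le)).measurable
      rw [transportCost, hπ', lintegral_map hmeasint hF]
      calc (∫⁻ w, ENNReal.ofReal (|G x w.2 - G x w.1| ^ p) ∂π)
          ≤ ∫⁻ w, c * ENNReal.ofReal (qnorm q (w.1 - w.2) ^ p) ∂π := by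
            apply lintegral_mono
            intro w
            have hle : |G x w.2 - G x w.1| ^ p ≤ γG x ^ p * qnorm q (w.1 - w.2) ^ p := by
              calc |G x w.2 - G x w.1| ^ p ≤ (γG x * qnorm q (w.2 - w.1)) ^ p :=
                    Real.rpow_le_rpow (abs_nonneg _) (hG x w.2 w.1) hp0.le
                _ = γG x ^ p * qnorm q (w.2 - w.1) ^ p :=
                    Real.mul_rpow hγ.le (qnorm_nonneg _ _)
                _ = γG x ^ p * qnorm q (w.1 - w.2) ^ p := by rw [qnorm_sub_comm]
            calc ENNReal.ofReal (|G x w.2 - G x w.1| ^ p)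
                ≤ ENNReal.ofReal (γG x ^ p * qnorm q (w.1 - w.2) ^ p) :=
                  ENNReal.ofReal_le_ofReal hle
              _ = ENNReal.ofReal (γG x ^ p) * ENNReal.ofReal (qnorm q (w.1 - w.2) ^ p) :=
                  ENNReal.ofReal_mul (by positivity)
              _ = c * ENNReal.ofReal (qnorm q (w.1 - w.2) ^ p) := by
                  rw [hc, ← ENNReal.ofReal_rpow_of_pos hγ]
        _ = c * transportCost p (fun a b => qnorm q (a - b)) π := by
            rw [lintegral_const_mul _ hmeascost]; rfl
    -- combine
    rw [wassersteinDist]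
    have h3 : (⨅ (π' : Measure (ℝ × ℝ)) (_ : IsProbabilityMeasure π' ∧
        π'.map Prod.fst = Q ∧ π'.map Prod.snd = empMeasure fun i => G x (ξh i)),
        transportCost p (fun a b => |a - b|) π') ≤ c * ENNReal.ofReal ε ^ p := by
      refine le_trans ?_ (mul_le_mul_right h1 c)
      rw [ENNReal.mul_iInf_of_ne hc0 hctop]
      refine le_iInf fun π => ?_
      rw [ENNReal.mul_iInf_of_ne hc0 hctop]
      exact le_iInf fun hfeas => h2 π hfeas
    have h4 : c * ENNReal.ofReal ε ^ p = ENNReal.ofReal (ε * γG x) ^ p := by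
      rw [hc, ENNReal.ofReal_mul hε.le, ENNReal.mul_rpow_of_nonneg _ _ hp0.le, mul_comm]
    calc (⨅ (π' : Measure (ℝ × ℝ)) (_ : IsProbabilityMeasure π' ∧
        π'.map Prod.fst = Q ∧ π'.map Prod.snd = empMeasure fun i => G x (ξh i)),
        transportCost p (fun a b => |a - b|) π') ^ (1 / p)
        ≤ (ENNReal.ofReal (ε * γG x) ^ p) ^ (1 / p) := by
          rw [← h4]
          exact ENNReal.rpow_le_rpow h3 (by positivity)
      _ = ENNReal.ofReal (ε * γG x) := by
          rw [← ENNReal.rpow_mul, mul_one_div, div_self hp0.ne', ENNReal.rpow_one]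
  -- Q is in the ball
  have hQball : Q ∈ realWassersteinBall p Set.univ (empMeasure fun i => G x (ξh i)) (ε * γG x) :=
    ⟨hQprob, by simp, hQmom, hWQ⟩
  -- conclude
  have hmem : ((∫ t, t ∂Q : ℝ) : EReal) ∈ ((fun Q : Measure ℝ => ((∫ t, t ∂Q : ℝ) : EReal)) ''
      realWassersteinBall p Set.univ (empMeasure fun i => G x (ξh i)) (ε * γG x)) :=
    ⟨Q, hQball, rfl⟩
  have h5 : (μ : EReal) ≤ ((∫ t, t ∂Q : ℝ) : EReal) := le_trans hx (sInf_le hmem)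
  have h6 : μ ≤ ∫ t, t ∂Q := EReal.coe_le_coe_iff.mp h5
  have h7 : (∫ t, t ∂Q) = ∫ ξ, G x ξ ∂ℙtrue := by
    rw [hQdef]
    exact integral_map hGmeas.aemeasurable aestronglyMeasurable_id
  rwa [h7] at h6
end

section
/- Let ξ̂₁,…,ξ̂_N ∈ ℝᵐ, α ∈ (0,1], μ ∈ ℝ, ε > 0, and let 𝒳 = { x ∈ ℝᵐ : Σ_{i=1}^m x_i = 1, x_i ≥ 0 for all i }. For x ∈ 𝒳 and τ ∈ ℝ, set F(x,τ,ξ) = max{ −⟨x,ξ⟩/α + (1−1/α)τ, τ } and let P̂^{(x,τ),F}_N = (1/N) Σᵢ δ_{F(x,τ,ξ̂ᵢ)} and P̂^{x,G}_N = (1/N) Σᵢ δ_{⟨x,ξ̂ᵢ⟩}. Then the value inf{ sup{ E_{ζ∼Q}[ζ] : Q ∈ 𝒫₂(ℝ), W₂(Q, P̂^{(x,τ),F}_N) ≤ ε ‖x‖₂/α } : (x,τ) ∈ 𝒳 × ℝ, inf{ E_{ζ∼Q}[ζ] : Q ∈ 𝒫₂(ℝ), W₂(Q, P̂^{x,G}_N)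 ≤ ε ‖x‖₂ } ≥ μ } equals inf{ (ε/α) ‖x‖₂ + (1/N) Σ_{i=1}^N max{ −⟨x,ξ̂ᵢ⟩/α + (1−1/α)τ, τ } : (x,τ) ∈ 𝒳 × ℝ, (1/N) Σ_{i=1}^N ⟨x,ξ̂ᵢ⟩ − ε ‖x‖₂ ≥ μ } (both values taken in the extended reals). -/
open MeasureTheory
open scoped ENNReal

open scoped RealInnerProductSpace

set_option linter.unusedVariables false

lemma lintegral_emp {N : ℕ} (y : Fin N → ℝ) (g : ℝ → ℝ≥0∞) :
    ∫⁻ t, g t ∂empMeasure y = (N : ℝ≥0∞)⁻¹ * ∑ i, g (y i) := by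
  simp [empMeasure, lintegral_smul_measure, lintegral_finset_sum_measure, lintegral_dirac]

lemma integrable_dirac'' {f : ℝ → ℝ} (hf : Measurable f) (a : ℝ) :
    Integrable f (Measure.dirac a) := by
  refine ⟨hf.aestronglyMeasurable, ?_⟩
  simp [HasFiniteIntegral, lintegral_dirac]

lemma integrable_emp {N : ℕ} (hN : 0 < N) (y : Fin N → ℝ) {f : ℝ → ℝ} (hf : Measurable f) :
    Integrable f (empMeasure y) := by
  unfold empMeasure
  refine Integrable.smul_measure ?_ (by simp [hN.ne'])
  exact integrable_finset_sum_measure.mpr fun i _ => integrable_dirac'' hf _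

lemma integral_emp {N : ℕ} (hN : 0 < N) (y : Fin N → ℝ) {f : ℝ → ℝ} (hf : Measurable f) :
    ∫ t, f t ∂empMeasure y = (1 / (N : ℝ)) * ∑ i, f (y i) := by
  rw [empMeasure, integral_smul_measure,
    integral_finset_sum_measure (fun i _ => integrable_dirac'' hf _)]
  simp [ENNReal.toReal_inv, one_div, mul_comm]

lemma prob_emp {N : ℕ} (hN : 0 < N) (y : Fin N → ℝ) :
    IsProbabilityMeasure (empMeasure y) := by
  constructor
  simp only [empMeasure, Measure.smul_apply, smul_eq_mul]
  rw [Measure.finset_sum_apply]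
  simp [Finset.card_univ, ENNReal.inv_mul_cancel (by exact_mod_cast hN.ne' : (N:ℝ≥0∞) ≠ 0)]


lemma integrable_id_of_moment {Q : Measure ℝ} (hQ : IsProbabilityMeasure Q)
    (h : (∫⁻ t, ENNReal.ofReal (|t| ^ (2:ℝ)) ∂Q) < ⊤) : Integrable (fun t => t) Q := by
  refine ⟨measurable_id.aestronglyMeasurable, ?_⟩
  rw [hasFiniteIntegral_iff_norm]
  calc (∫⁻ t, ENNReal.ofReal ‖t‖ ∂Q)
      ≤ ∫⁻ t, 1 + ENNReal.ofReal (|t| ^ (2:ℝ)) ∂Q := by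
        refine lintegral_mono fun t => ?_
        rw [Real.norm_eq_abs, Real.rpow_two]
        calc ENNReal.ofReal |t| ≤ ENNReal.ofReal (1 + |t|^2) := by
              apply ENNReal.ofReal_le_ofReal; nlinarith [abs_nonneg t, sq_nonneg (|t| - 1)]
          _ = 1 + ENNReal.ofReal (|t|^2) := by
              rw [ENNReal.ofReal_add zero_le_one (by positivity), ENNReal.ofReal_one]
    _ = 1 + ∫⁻ t, ENNReal.ofReal (|t| ^ (2:ℝ)) ∂Q := by
        rw [lintegral_add_left measurable_const]; simp
    _ < ⊤ := by
        exact ENNReal.add_lt_top.mpr ⟨ENNReal.one_lt_top, h⟩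

lemma mean_diff_le {Q ν : Measure ℝ} (hQ : IsProbabilityMeasure Q)
    (hQi : Integrable (fun t => t) Q) (hνi : Integrable (fun t => t) ν)
    {r : ℝ} (hr : 0 ≤ r)
    (hW : wassersteinDist 2 (fun a b => |a - b|) Q ν ≤ ENNReal.ofReal r) :
    |(∫ t, t ∂Q) - ∫ t, t ∂ν| ≤ r := by
  -- reduce to: for all δ > 0, |d| ≤ sqrt (r^2 + δ)
  have key : ∀ δ : ℝ, 0 < δ → |(∫ t, t ∂Q) - ∫ t, t ∂ν| ≤ Real.sqrt (r^2 + δ) := by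
    intro δ hδ
    -- extract a near-optimal coupling
    have hI : (⨅ (π : Measure (ℝ × ℝ)) (_ : IsProbabilityMeasure π ∧
        π.map Prod.fst = Q ∧ π.map Prod.snd = ν), transportCost 2 (fun a b => |a - b|) π)
        < ENNReal.ofReal (r^2 + δ) := by
      have h1 : (⨅ (π : Measure (ℝ × ℝ)) (_ : IsProbabilityMeasure π ∧
          π.map Prod.fst = Q ∧ π.map Prod.snd = ν), transportCost 2 (fun a b => |a - b|) π)
          ≤ ENNReal.ofReal (r^2) := by
        have h2 := ENNReal.rpow_le_rpow hW (by norm_num : (0:ℝ) ≤ 2)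
        rw [wassersteinDist] at hW
        calc _ = ((⨅ (π : Measure (ℝ × ℝ)) (_ : IsProbabilityMeasure π ∧
              π.map Prod.fst = Q ∧ π.map Prod.snd = ν), transportCost 2 (fun a b => |a - b|) π)
              ^ ((1:ℝ)/2)) ^ (2:ℝ) := by
              rw [← ENNReal.rpow_mul]; norm_num
          _ ≤ (ENNReal.ofReal r) ^ (2:ℝ) := ENNReal.rpow_le_rpow hW (by norm_num)
          _ = ENNReal.ofReal (r^2) := by
              rw [ENNReal.ofReal_rpow_of_nonneg hr (by norm_num), Real.rpow_two]
      exact lt_of_le_of_lt h1 (ENNReal.ofReal_lt_ofReal_iff (by positivity) |>.mpr (by linarith))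
    rw [iInf_lt_iff] at hI
    obtain ⟨π, hI⟩ := hI
    rw [iInf_lt_iff] at hI
    obtain ⟨⟨hπp, hπ1, hπ2⟩, hcost⟩ := hI
    -- integrability of coordinates
    have hm1 : Integrable (fun w : ℝ × ℝ => w.1) π := by
      rw [← hπ1] at hQi
      exact (integrable_map_measure measurable_id.aestronglyMeasurable
        measurable_fst.aemeasurable).mp hQi
    have hm2 : Integrable (fun w : ℝ × ℝ => w.2) π := by
      rw [← hπ2] at hνi
      exact (integrable_map_measure measurable_id.aestronglyMeasurable
        measurable_snd.aemeasurable).mp hνi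
    have hiQ : (∫ t, t ∂Q) = ∫ w : ℝ × ℝ, w.1 ∂π := by
      rw [← hπ1]
      exact integral_map (φ := Prod.fst) measurable_fst.aemeasurable
        (f := fun t : ℝ => t) measurable_id.aestronglyMeasurable
    have hiν : (∫ t, t ∂ν) = ∫ w : ℝ × ℝ, w.2 ∂π := by
      rw [← hπ2]
      exact integral_map (φ := Prod.snd) measurable_snd.aemeasurable
        (f := fun t : ℝ => t) measurable_id.aestronglyMeasurable
    rw [hiQ, hiν, ← integral_sub hm1 hm2]
    -- Cauchy–Schwarz / Hölder step
    have habs : |∫ w : ℝ × ℝ, (w.1 - w.2) ∂π| ≤ ∫ w : ℝ × ℝ, |w.1 - w.2| ∂π := by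
      simpa [Real.norm_eq_abs] using
        norm_integral_le_integral_norm (μ := π) (f := fun w : ℝ × ℝ => w.1 - w.2)
    have hmeas : Measurable (fun w : ℝ × ℝ => |w.1 - w.2|) :=
      (measurable_fst.sub measurable_snd).abs
    have heq : (∫ w : ℝ × ℝ, |w.1 - w.2| ∂π)
        = (∫⁻ w : ℝ × ℝ, ENNReal.ofReal (|w.1 - w.2|) ∂π).toReal := by
      rw [integral_eq_lintegral_of_nonneg_ae (Filter.Eventually.of_forall fun w => abs_nonneg _)
        hmeas.aestronglyMeasurable]
    have hholder : (∫⁻ w : ℝ × ℝ, ENNReal.ofReal (|w.1 - w.2|) ∂π)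
        ≤ (transportCost 2 (fun a b => |a - b|) π) ^ ((1:ℝ)/2) := by
      have hconj : Real.HolderConjugate 2 2 := ⟨by norm_num, by norm_num, by norm_num⟩
      have h2 := ENNReal.lintegral_mul_le_Lp_mul_Lq π hconj
        (f := fun w : ℝ × ℝ => ENNReal.ofReal (|w.1 - w.2|)) (g := fun _ => 1)
        (ENNReal.measurable_ofReal.comp hmeas).aemeasurable aemeasurable_const
      simp only [mul_one, Pi.mul_apply, ENNReal.one_rpow, lintegral_const,
        measure_univ, one_mul] at h2
      calc (∫⁻ w : ℝ × ℝ, ENNReal.ofReal (|w.1 - w.2|) ∂π)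
          ≤ (∫⁻ w : ℝ × ℝ, ENNReal.ofReal (|w.1 - w.2|) ^ (2:ℝ) ∂π) ^ ((1:ℝ)/2) := h2
        _ = (transportCost 2 (fun a b => |a - b|) π) ^ ((1:ℝ)/2) := by
            rw [transportCost]
            congr 1
            refine lintegral_congr fun w => ?_
            rw [ENNReal.ofReal_rpow_of_nonneg (abs_nonneg _) (by norm_num)]
    have hle : (∫⁻ w : ℝ × ℝ, ENNReal.ofReal (|w.1 - w.2|) ∂π)
        ≤ ENNReal.ofReal (Real.sqrt (r^2 + δ)) := by
      calc (∫⁻ w : ℝ × ℝ, ENNReal.ofReal (|w.1 - w.2|) ∂π)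
          ≤ (transportCost 2 (fun a b => |a - b|) π) ^ ((1:ℝ)/2) := hholder
        _ ≤ (ENNReal.ofReal (r^2 + δ)) ^ ((1:ℝ)/2) :=
            ENNReal.rpow_le_rpow hcost.le (by norm_num)
        _ = ENNReal.ofReal (Real.sqrt (r^2 + δ)) := by
            rw [ENNReal.ofReal_rpow_of_nonneg (by positivity) (by norm_num),
              Real.sqrt_eq_rpow]
    calc |∫ w : ℝ × ℝ, (w.1 - w.2) ∂π| ≤ ∫ w : ℝ × ℝ, |w.1 - w.2| ∂π := habs
      _ = (∫⁻ w : ℝ × ℝ, ENNReal.ofReal (|w.1 - w.2|) ∂π).toReal := heq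
      _ ≤ (ENNReal.ofReal (Real.sqrt (r^2 + δ))).toReal :=
          ENNReal.toReal_mono ENNReal.ofReal_ne_top hle
      _ = Real.sqrt (r^2 + δ) := ENNReal.toReal_ofReal (Real.sqrt_nonneg _)
  -- conclude from key
  set d := |(∫ t, t ∂Q) - ∫ t, t ∂ν| with hd
  have hd0 : 0 ≤ d := abs_nonneg _
  have hsq : d ^ 2 ≤ r ^ 2 := by
    refine le_of_forall_pos_le_add fun δ hδ => ?_
    have h1 := key δ hδ
    calc d ^ 2 ≤ Real.sqrt (r^2 + δ) ^ 2 := by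
          exact pow_le_pow_left₀ hd0 h1 2
      _ = r ^ 2 + δ := Real.sq_sqrt (by positivity)
  calc d = Real.sqrt (d ^ 2) := (Real.sqrt_sq hd0).symm
    _ ≤ Real.sqrt (r ^ 2) := Real.sqrt_le_sqrt hsq
    _ = r := Real.sqrt_sq hr


lemma measurable_sqabs : Measurable (fun t : ℝ => ENNReal.ofReal (|t| ^ (2:ℝ))) := by
  fun_prop

lemma moment_emp {N : ℕ} (hN : 0 < N) (y : Fin N → ℝ) :
    (∫⁻ t, ENNReal.ofReal (|t| ^ (2:ℝ)) ∂empMeasure y) < ⊤ := by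
  rw [lintegral_emp]
  exact ENNReal.mul_lt_top (by simp [hN]) (ENNReal.sum_lt_top.mpr fun i _ => ENNReal.ofReal_lt_top)

lemma mem_shift {N : ℕ} (hN : 0 < N) (y : Fin N → ℝ) {c r : ℝ} (hc : |c| ≤ r) :
    (empMeasure y).map (fun t => t + c) ∈ realWassersteinBall 2 Set.univ (empMeasure y) r := by
  haveI := prob_emp hN y
  have hmap : Measurable (fun t : ℝ => t + c) := measurable_add_const c
  have hpair : Measurable (fun t : ℝ => (t + c, t)) := hmap.prodMk measurable_id
  refine ⟨Measure.isProbabilityMeasure_map hmap.aemeasurable, by simp, ?_, ?_⟩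
  · rw [lintegral_map measurable_sqabs hmap]
    calc (∫⁻ t, ENNReal.ofReal (|t + c| ^ (2:ℝ)) ∂empMeasure y)
        = (N : ℝ≥0∞)⁻¹ * ∑ i, ENNReal.ofReal (|y i + c| ^ (2:ℝ)) := lintegral_emp y _
      _ < ⊤ := ENNReal.mul_lt_top (by simp [hN]) (ENNReal.sum_lt_top.mpr fun i _ => ENNReal.ofReal_lt_top)
  · set π := (empMeasure y).map (fun t => (t + c, t)) with hπ
    haveI hπp : IsProbabilityMeasure π := Measure.isProbabilityMeasure_map hpair.aemeasurable
    have h1 : π.map Prod.fst = (empMeasure y).map (fun t => t + c) := by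
      rw [hπ, Measure.map_map measurable_fst hpair]; rfl
    have h2 : π.map Prod.snd = empMeasure y := by
      rw [hπ, Measure.map_map measurable_snd hpair]
      exact Measure.map_id
    have hcost : transportCost 2 (fun a b => |a - b|) π = ENNReal.ofReal (|c| ^ (2:ℝ)) := by
      rw [transportCost, hπ, lintegral_map (by fun_prop) hpair]
      have hcc : ∀ a : ℝ, a + c - a = c := fun a => by ring
      simp only [hcc]
      rw [lintegral_const, measure_univ, mul_one]
    rw [wassersteinDist]
    calc (⨅ (π' : Measure (ℝ × ℝ)) (_ : IsProbabilityMeasure π' ∧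
          π'.map Prod.fst = (empMeasure y).map (fun t => t + c) ∧ π'.map Prod.snd = empMeasure y),
          transportCost 2 (fun a b => |a - b|) π') ^ ((1:ℝ)/2)
        ≤ (transportCost 2 (fun a b => |a - b|) π) ^ ((1:ℝ)/2) :=
          ENNReal.rpow_le_rpow (iInf₂_le π ⟨hπp, h1, h2⟩) (by norm_num)
      _ = ENNReal.ofReal |c| := by
          rw [hcost, ENNReal.ofReal_rpow_of_nonneg (Real.rpow_nonneg (abs_nonneg c) 2)
            (by norm_num : (0:ℝ) ≤ 1/2), ← Real.rpow_mul (abs_nonneg c)]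
          norm_num
      _ ≤ ENNReal.ofReal r := ENNReal.ofReal_le_ofReal hc

lemma mean_shift {N : ℕ} (hN : 0 < N) (y : Fin N → ℝ) (c : ℝ) :
    ∫ t, t ∂((empMeasure y).map (fun t => t + c)) = (1 / (N:ℝ)) * ∑ i, y i + c := by
  have hmap : Measurable (fun t : ℝ => t + c) := measurable_add_const c
  rw [integral_map (φ := fun t : ℝ => t + c) hmap.aemeasurable
    (f := fun t : ℝ => t) measurable_id.aestronglyMeasurable,
    integral_emp hN y (hmap)]
  rw [Finset.sum_add_distrib, Finset.sum_const, Finset.card_univ, Fintype.card_fin]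
  have : (N : ℝ) ≠ 0 := Nat.cast_ne_zero.mpr hN.ne'
  field_simp
  ring


lemma ball_sSup {N : ℕ} (hN : 0 < N) (y : Fin N → ℝ) {r : ℝ} (hr : 0 ≤ r) :
    sSup ((fun Q : Measure ℝ => ((∫ t, t ∂Q : ℝ) : EReal)) ''
      realWassersteinBall 2 Set.univ (empMeasure y) r)
      = (((1 / (N:ℝ)) * ∑ i, y i + r : ℝ) : EReal) := by
  haveI := prob_emp hN y
  apply le_antisymm
  · refine sSup_le ?_
    rintro v ⟨Q, ⟨hQp, -, hQm, hQw⟩, rfl⟩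
    have hQi := integrable_id_of_moment hQp hQm
    have hνi : Integrable (fun t => t) (empMeasure y) := integrable_emp hN y (f := fun t => t) measurable_id
    have h := mean_diff_le hQp hQi hνi hr hQw
    rw [integral_emp hN y (f := fun t => t) measurable_id] at h
    have h2 : (∫ t, t ∂Q) ≤ (1 / (N:ℝ)) * ∑ i, y i + r := by
      have h3 := (abs_le.mp h).2; linarith
    exact EReal.coe_le_coe_iff.mpr h2
  · refine le_sSup ⟨(empMeasure y).map (fun t => t + r),
      mem_shift hN y (by rw [abs_of_nonneg hr]), ?_⟩
    show (((∫ t, t ∂((empMeasure y).map fun t => t + r)) : ℝ) : EReal) = _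
    rw [mean_shift hN y r]

lemma ball_sInf {N : ℕ} (hN : 0 < N) (y : Fin N → ℝ) {r : ℝ} (hr : 0 ≤ r) :
    sInf ((fun Q : Measure ℝ => ((∫ t, t ∂Q : ℝ) : EReal)) ''
      realWassersteinBall 2 Set.univ (empMeasure y) r)
      = (((1 / (N:ℝ)) * ∑ i, y i - r : ℝ) : EReal) := by
  haveI := prob_emp hN y
  apply le_antisymm
  · refine sInf_le ⟨(empMeasure y).map (fun t => t + (-r)),
      mem_shift hN y (by rw [abs_neg, abs_of_nonneg hr]), ?_⟩
    show (((∫ t, t ∂((empMeasure y).map fun t => t + (-r))) : ℝ) : EReal) = _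
    rw [mean_shift hN y (-r)]
    exact EReal.coe_eq_coe_iff.mpr (by ring)
  · refine le_sInf ?_
    rintro v ⟨Q, ⟨hQp, -, hQm, hQw⟩, rfl⟩
    have hQi := integrable_id_of_moment hQp hQm
    have hνi : Integrable (fun t => t) (empMeasure y) := integrable_emp hN y (f := fun t => t) measurable_id
    have h := mean_diff_le hQp hQi hνi hr hQw
    rw [integral_emp hN y (f := fun t => t) measurable_id] at h
    have h2 : (1 / (N:ℝ)) * ∑ i, y i - r ≤ ∫ t, t ∂Q := by
      have h3 := (abs_le.mp h).1; linarith
    exact EReal.coe_le_coe_iff.mpr h2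

/-- The decision-dependent Wasserstein DRO mean-CVaR portfolio problem and its
finite-dimensional reformulation. -/
theorem statement11 {m N : ℕ} (hN : 0 < N)
    (ξh : Fin N → EuclideanSpace ℝ (Fin m))
    (α : ℝ) (hα : 0 < α) (hα1 : α ≤ 1)
    (μ : ℝ) (ε : ℝ) (hε : 0 < ε) :
    sInf {v : EReal | ∃ x : EuclideanSpace ℝ (Fin m), ∃ τ : ℝ,
        (∑ i, x i) = 1 ∧ (∀ i, 0 ≤ x i) ∧
        ((μ : EReal) ≤ sInf ((fun Q : Measure ℝ => ((∫ t, t ∂Q : ℝ) : EReal)) ''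
          realWassersteinBall 2 Set.univ
            (empMeasure fun i => ⟪x, ξh i⟫) (ε * ‖x‖))) ∧
        v = sSup ((fun Q : Measure ℝ => ((∫ t, t ∂Q : ℝ) : EReal)) ''
          realWassersteinBall 2 Set.univ
            (empMeasure fun i => max (-⟪x, ξh i⟫ / α + (1 - 1 / α) * τ) τ)
            (ε * ‖x‖ / α))} =
    sInf {v : EReal | ∃ x : EuclideanSpace ℝ (Fin m), ∃ τ : ℝ,
        (∑ i, x i) = 1 ∧ (∀ i, 0 ≤ x i) ∧
        (μ ≤ (1 / (N : ℝ)) * ∑ i, ⟪x, ξh i⟫ - ε * ‖x‖) ∧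
        v = (((ε / α) * ‖x‖ +
          (1 / (N : ℝ)) * ∑ i, max (-⟪x, ξh i⟫ / α + (1 - 1 / α) * τ) τ : ℝ) : EReal)} := by
  have hset : ∀ (x : EuclideanSpace ℝ (Fin m)) (τ : ℝ),
      (((μ : EReal) ≤ sInf ((fun Q : Measure ℝ => ((∫ t, t ∂Q : ℝ) : EReal)) ''
          realWassersteinBall 2 Set.univ
            (empMeasure fun i => ⟪x, ξh i⟫) (ε * ‖x‖))) ↔
        (μ ≤ (1 / (N : ℝ)) * ∑ i, ⟪x, ξh i⟫ - ε * ‖x‖)) ∧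
      sSup ((fun Q : Measure ℝ => ((∫ t, t ∂Q : ℝ) : EReal)) ''
          realWassersteinBall 2 Set.univ
            (empMeasure fun i => max (-⟪x, ξh i⟫ / α + (1 - 1 / α) * τ) τ)
            (ε * ‖x‖ / α)) =
        (((ε / α) * ‖x‖ +
          (1 / (N : ℝ)) * ∑ i, max (-⟪x, ξh i⟫ / α + (1 - 1 / α) * τ) τ : ℝ) : EReal) := by
    intro x τ
    constructor
    · rw [ball_sInf hN _ (mul_nonneg hε.le (norm_nonneg x))]
      exact EReal.coe_le_coe_iff
    · rw [ball_sSup hN _ (div_nonneg (mul_nonneg hε.le (norm_nonneg x)) hα.le)]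
      exact EReal.coe_eq_coe_iff.mpr (by ring)
  congr 1
  ext v
  simp only [Set.mem_setOf_eq]
  constructor
  · rintro ⟨x, τ, hs, hx, hμ, hv⟩
    exact ⟨x, τ, hs, hx, ((hset x τ).1).mp hμ, by rw [hv, (hset x τ).2]⟩
  · rintro ⟨x, τ, hs, hx, hμ, hv⟩
    exact ⟨x, τ, hs, hx, ((hset x τ).1).mpr hμ, by rw [hv, ← (hset x τ).2]⟩
end
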